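/- Let V be a finite-dimensional real vector space with Lorentzian scalar product g, future causal cone C, and fix a linear functional θ ∈ V* with θ(v) ≥ max{2√|g(v,v)|, |v|} for all v ∈ C (for some auxiliary norm |·|). Define L(v) := (θ(v) - √|g(v,v)|)² for v ∈ C and +∞ otherwise, and H(p) := sup_{v ∈ V} (p(v) - L(v)). Then for every p ∈ V* not in the dual cone C* (i.e., p(v₀) > 0 for some v₀ ∈ C), one has H(p) > 0 and the supremum defining H(p) is attained at some v₁ in the interior of C; moreover p = dL(v₁), the derivative of L at v₁. -/

import Mathlib

noncomputable section

set_option maxHeartbeats 8000000 in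
/-- Let `V` be a finite-dimensional real vector space with a Lorentzian
scalar product `g` (signature `(-,+,...,+)`, time-oriented by `X`), future causal cone `C`
(including `0`), and `θ ∈ V*` with `θ(v) ≥ max (2√|g(v,v)|) ‖v‖` for all `v ∈ C`. Let
`L(v) := (θ(v) - √|g(v,v)|)²` (the finite value of the Lagrangian; `L = +∞` off `C`, so the
Hamiltonian `H(p) = sup_v (p(v) - L(v))` is the supremum over `v ∈ C`). Then for every
`p ∈ V*` not in the dual cone `C*` (i.e. `p(v₀) > 0` for some `v₀ ∈ C`): `H(p) > 0`, the
supremum defining `H(p)` is attained at some `v₁` in the interior of `C`, and `p = dL(v₁)`. -/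
theorem hamiltonian_sup_attained {V : Type*} [NormedAddCommGroup V] [NormedSpace ℝ V]
    [FiniteDimensional ℝ V] (n : ℕ) (hn : 2 ≤ n)
    (g : V →ₗ[ℝ] V →ₗ[ℝ] ℝ) (hsymm : ∀ v w, g v w = g w v)
    (b : Module.Basis (Fin n) ℝ V)
    (hsig : ∀ i j, g (b i) (b j) =
      if i = j then (if (i : ℕ) = 0 then (-1 : ℝ) else 1) else 0)
    (X : V) (hX : g X X < 0)
    (C : Set V) (hC : C = {v | v = 0 ∨ (g v v ≤ 0 ∧ v ≠ 0 ∧ g v X ≤ 0)})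
    (θ : V →L[ℝ] ℝ)
    (hθ : ∀ v ∈ C, max (2 * Real.sqrt |g v v|) ‖v‖ ≤ θ v)
    (L : V → ℝ) (hL : ∀ v, L v = (θ v - Real.sqrt |g v v|) ^ 2)
    (p : V →L[ℝ] ℝ) (hp : ∃ v₀ ∈ C, 0 < p v₀)
    (H : ℝ) (hH : IsLUB {r : ℝ | ∃ v ∈ C, r = p v - L v} H) :
    0 < H ∧ ∃ v₁ ∈ interior C, H = p v₁ - L v₁ ∧ HasFDerivAt L p v₁ := by
  classical
  -- continuous bilinear version of g
  set B : V →L[ℝ] V →L[ℝ] ℝ :=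
    LinearMap.toContinuousLinearMap
      ((LinearMap.toContinuousLinearMap :
        (V →ₗ[ℝ] ℝ) ≃ₗ[ℝ] (V →L[ℝ] ℝ)).toLinearMap ∘ₗ g) with hB
  have hBg : ∀ v w : V, B v w = g v w := by
    intro v w; simp [hB]
  have hQdiff : Differentiable ℝ (fun v : V => g v v) := by
    have h1 : Differentiable ℝ (fun v : V => (B v) v) :=
      (isBoundedBilinearMap_apply (𝕜 := ℝ) (E := V) (F := ℝ)).differentiable.comp
        (Differentiable.prodMk B.differentiable differentiable_id)
    have : (fun v : V => (B v) v) = fun v : V => g v v := by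
      funext v; exact hBg v v
    rwa [this] at h1
  have hQcont : Continuous (fun v : V => g v v) := hQdiff.continuous
  have hgXcont : Continuous (fun v : V => g v X) := by
    have : (fun v : V => g v X) = fun v => (B.flip X) v := by
      funext v; simp [hBg v X]
    rw [this]; exact (B.flip X).continuous
  -- coordinate representation
  have hrep : ∀ v w : V, g v w =
      ∑ i : Fin n, (if (i : ℕ) = 0 then (-1 : ℝ) else 1) * (b.repr v i * b.repr w i) := by
    intro v w
    calc g v w
        = ∑ i : Fin n, ∑ j : Fin n, b.repr v i * (b.repr w j * g (b i) (b j)) := by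
          conv_lhs => rw [← b.sum_repr v, ← b.sum_repr w]
          simp only [map_sum, map_smul, LinearMap.coe_sum, Finset.sum_apply,
            LinearMap.smul_apply, smul_eq_mul, Finset.mul_sum, Finset.sum_mul]
          rw [Finset.sum_comm]
          refine Finset.sum_congr rfl fun i _ => Finset.sum_congr rfl fun j _ => by ring
      _ = _ := by
          refine Finset.sum_congr rfl fun i _ => ?_
          rw [Finset.sum_eq_single i]
          · rw [hsig]; simp only [if_pos rfl]; try ring
            try simp
          · intro j _ hj; rw [hsig]; simp [Ne.symm hj]
          · simp
  set i0 : Fin n := ⟨0, by omega⟩ with hi0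
  have hsplit : ∀ v w : V, g v w = -(b.repr v i0 * b.repr w i0) +
      ∑ i ∈ Finset.univ.erase i0, b.repr v i * b.repr w i := by
    intro v w
    rw [hrep, ← Finset.add_sum_erase _ _ (Finset.mem_univ i0)]
    congr 1
    · simp [hi0]
    · refine Finset.sum_congr rfl fun i hi => ?_
      have hne : (i : ℕ) ≠ 0 := by
        intro h
        exact (Finset.mem_erase.mp hi).1 (Fin.ext (h.trans rfl))
      simp [hne]
  -- key: causal nonzero vector is not orthogonal to timelike X
  have hkey : ∀ v : V, g v v ≤ 0 → v ≠ 0 → g v X ≠ 0 := by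
    intro v hvv hv0 hvX
    set s : Finset (Fin n) := Finset.univ.erase i0 with hs
    have h1 : ∑ i ∈ s, b.repr v i * b.repr v i ≤ b.repr v i0 * b.repr v i0 := by
      have := hsplit v v; linarith
    have h2 : ∑ i ∈ s, b.repr X i * b.repr X i < b.repr X i0 * b.repr X i0 := by
      have := hsplit X X; linarith
    have h3 : b.repr v i0 * b.repr X i0 = ∑ i ∈ s, b.repr v i * b.repr X i := by
      have := hsplit v X; rw [hvX] at this; linarith
    have hA : 0 ≤ ∑ i ∈ s, b.repr v i * b.repr v i :=
      Finset.sum_nonneg fun i _ => mul_self_nonneg _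
    have hXnn : 0 ≤ ∑ i ∈ s, b.repr X i * b.repr X i :=
      Finset.sum_nonneg fun i _ => mul_self_nonneg _
    rcases hA.lt_or_eq with hApos | hA0
    · have cs := Finset.sum_mul_sq_le_sq_mul_sq s (fun i => b.repr v i) (fun i => b.repr X i)
      simp only [pow_two] at cs
      rw [← h3] at cs
      have f1 := mul_lt_mul_of_pos_left h2 hApos
      have f2 := mul_le_mul_of_nonneg_right h1 (mul_self_nonneg (b.repr X i0))
      have e1 : (b.repr v i0 * b.repr X i0) * (b.repr v i0 * b.repr X i0)
          = (b.repr v i0 * b.repr v i0) * (b.repr X i0 * b.repr X i0) := by ring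
      linarith [cs, f1, f2, e1]
    · have hall : ∀ i ∈ s, b.repr v i = 0 := by
        intro i hi
        have hz := (Finset.sum_eq_zero_iff_of_nonneg
          (fun i _ => mul_self_nonneg (b.repr v i))).mp hA0.symm i hi
        exact mul_self_eq_zero.mp hz
      have ha0 : b.repr v i0 ≠ 0 := by
        intro h
        apply hv0
        have hz : b.repr v = 0 := by
          ext i
          by_cases hi : i = i0
          · rw [hi]; exact h
          · exact hall i (Finset.mem_erase.mpr ⟨hi, Finset.mem_univ i⟩)
        have := b.repr.map_eq_zero_iff.mp hz
        exact this
      have hsum0 : ∑ i ∈ s, b.repr v i * b.repr X i = 0 :=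
        Finset.sum_eq_zero fun i hi => by rw [hall i hi, zero_mul]
      have hx0 : b.repr X i0 = 0 := by
        rw [hsum0] at h3
        exact (mul_eq_zero.mp h3).resolve_left ha0
      rw [hx0] at h2
      nlinarith [hXnn]
  -- C as closed set
  have hCeq : C = {v : V | g v v ≤ 0 ∧ g v X ≤ 0} := by
    rw [hC]; ext v
    constructor
    · rintro (rfl | ⟨h1, _, h3⟩)
      · constructor <;> simp
      · exact ⟨h1, h3⟩
    · rintro ⟨h1, h2⟩
      by_cases hv : v = 0
      · exact Or.inl hv
      · exact Or.inr ⟨h1, hv, h2⟩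
  have hCclosed : IsClosed C := by
    rw [hCeq]
    exact (isClosed_le hQcont continuous_const).inter (isClosed_le hgXcont continuous_const)
  have h0C : (0 : V) ∈ C := by rw [hC]; exact Or.inl rfl
  -- superlinearity of L on C
  have hL0 : ∀ v, 0 ≤ L v := by intro v; rw [hL]; positivity
  have hLlb : ∀ v ∈ C, ‖v‖ ^ 2 / 4 ≤ L v := by
    intro v hv
    have h1 := hθ v hv
    have h2 : 2 * Real.sqrt |g v v| ≤ θ v := le_trans (le_max_left _ _) h1
    have h3 : ‖v‖ ≤ θ v := le_trans (le_max_right _ _) h1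
    have hs : 0 ≤ Real.sqrt |g v v| := Real.sqrt_nonneg _
    have hnn : 0 ≤ ‖v‖ := norm_nonneg v
    rw [hL]
    nlinarith
  -- scaling
  have hscale : ∀ t : ℝ, 0 < t → ∀ v ∈ C, t • v ∈ C := by
    intro t ht v hv
    rw [hC] at hv ⊢
    rcases hv with rfl | ⟨h1, h2, h3⟩
    · left; simp
    · right
      refine ⟨?_, smul_ne_zero ht.ne' h2, ?_⟩
      · have : g (t • v) (t • v) = t ^ 2 * g v v := by
          simp [map_smul, smul_eq_mul]; ring
        rw [this]
        exact mul_nonpos_of_nonneg_of_nonpos (sq_nonneg t) h1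
      · have : g (t • v) X = t * g v X := by simp [map_smul, smul_eq_mul]
        rw [this]
        exact mul_nonpos_of_nonneg_of_nonpos ht.le h3
  have hLscale : ∀ t : ℝ, 0 ≤ t → ∀ v, L (t • v) = t ^ 2 * L v := by
    intro t ht v
    rw [hL, hL]
    have hg : g (t • v) (t • v) = t ^ 2 * g v v := by
      simp [map_smul, smul_eq_mul]; ring
    rw [hg, abs_mul, abs_of_nonneg (sq_nonneg t), Real.sqrt_mul (sq_nonneg t),
      Real.sqrt_sq ht]
    have hθs : θ (t • v) = t * θ v := by simp
    rw [hθs]; ring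
  -- H > 0
  obtain ⟨v₀, hv₀C, hv₀p⟩ := hp
  have hHpos : 0 < H := by
    set t : ℝ := min 1 (p v₀ / (2 * (L v₀ + 1))) with htdef
    have htpos : 0 < t := lt_min one_pos (div_pos hv₀p (by have := hL0 v₀; linarith))
    have hle := hH.1 ⟨t • v₀, hscale t htpos v₀ hv₀C, rfl⟩
    have hval : 0 < p (t • v₀) - L (t • v₀) := by
      rw [hLscale t htpos.le, map_smul, smul_eq_mul]
      have ht1 : t ≤ 1 := min_le_left _ _
      have ht2 : t * (2 * (L v₀ + 1)) ≤ p v₀ := by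
        have := min_le_right 1 (p v₀ / (2 * (L v₀ + 1)))
        rw [← htdef] at this
        calc t * (2 * (L v₀ + 1)) ≤ (p v₀ / (2 * (L v₀ + 1))) * (2 * (L v₀ + 1)) := by
              apply mul_le_mul_of_nonneg_right this (by have := hL0 v₀; linarith)
          _ = p v₀ := by
              have hne : (2 * (L v₀ + 1)) ≠ 0 := ne_of_gt (by have := hL0 v₀; linarith)
              rw [div_mul_cancel₀ _ hne]
      linarith [mul_le_mul_of_nonneg_left ht2 htpos.le,
        mul_nonneg (mul_nonneg htpos.le htpos.le) (hL0 v₀), mul_pos htpos htpos]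
    linarith
  -- continuity of L and f
  have hLcont : Continuous L := by
    have : L = fun v => (θ v - Real.sqrt |g v v|) ^ 2 := funext hL
    rw [this]
    exact ((θ.continuous.sub (Real.continuous_sqrt.comp hQcont.abs))).pow 2
  set f : V → ℝ := fun v => p v - L v with hf
  have hfcont : Continuous f := p.continuous.sub hLcont
  -- attainment on compact set
  set R : ℝ := 4 * ‖p‖ + 1 with hR
  have hout : ∀ v ∈ C, R < ‖v‖ → f v < 0 := by
    intro v hv hRv
    have h1 := hLlb v hv
    have hpb : p v ≤ ‖p‖ * ‖v‖ := le_trans (le_abs_self _) (p.le_opNorm v)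
    have hvpos : 0 < ‖v‖ := lt_trans (by positivity) hRv
    simp only [hf]
    nlinarith [mul_lt_mul_of_pos_left hRv hvpos, norm_nonneg p]
  set K : Set V := C ∩ Metric.closedBall (0 : V) R with hK
  have hKcomp : IsCompact K := (isCompact_closedBall (0 : V) R).inter_left hCclosed
  have hK0 : (0 : V) ∈ K := ⟨h0C, by simp [hR]; positivity⟩
  obtain ⟨v₁, hv₁K, hv₁max⟩ := hKcomp.exists_isMaxOn ⟨0, hK0⟩ hfcont.continuousOn
  have hv₁C : v₁ ∈ C := hv₁K.1
  have hfv₁H : f v₁ = H := by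
    have hle : f v₁ ≤ H := hH.1 ⟨v₁, hv₁C, rfl⟩
    by_contra hne
    have hlt : f v₁ < H := lt_of_le_of_ne hle hne
    have hmaxlt : max (f v₁) 0 < H := max_lt hlt hHpos
    have hnotub : ¬(max (f v₁) 0 ∈ upperBounds {r : ℝ | ∃ v ∈ C, r = p v - L v}) := by
      intro hub
      exact absurd (hH.2 hub) (not_le.mpr hmaxlt)
    simp only [upperBounds, Set.mem_setOf_eq] at hnotub
    push_neg at hnotub
    obtain ⟨r, ⟨v, hvC, rfl⟩, hr⟩ := hnotub
    have hfv : max (f v₁) 0 < f v := hr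
    have hvball : ‖v‖ ≤ R := by
      by_contra hb
      push_neg at hb
      have := hout v hvC hb
      have : f v < 0 := this
      have : (0:ℝ) ≤ max (f v₁) 0 := le_max_right _ _
      linarith [hfv]
    have hvK : v ∈ K := ⟨hvC, by simpa [Metric.mem_closedBall] using hvball⟩
    have := hv₁max hvK
    have h2 : f v₁ < f v := lt_of_le_of_lt (le_max_left _ _) hfv
    exact absurd this (not_le.mpr h2)
  have hv₁ne : v₁ ≠ 0 := by
    intro h
    rw [h] at hfv₁H
    have : f 0 = 0 := by simp [hf, hL]
    rw [this] at hfv₁H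
    linarith
  have hq : g v₁ v₁ ≤ 0 := by
    have := hv₁C; rw [hCeq] at this; exact this.1
  have hqX : g v₁ X ≤ 0 := by
    have := hv₁C; rw [hCeq] at this; exact this.2
  have hv₁X : g v₁ X < 0 := lt_of_le_of_ne hqX (hkey v₁ hq hv₁ne)
  -- v₁ + t X ∈ C for all t > 0
  have hmemC : ∀ t : ℝ, 0 < t → v₁ + t • X ∈ C := by
    intro t ht
    rw [hCeq]
    constructor
    · have hexp : g (v₁ + t • X) (v₁ + t • X) =
        g v₁ v₁ + 2 * t * g v₁ X + t ^ 2 * g X X := by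
        simp [map_add, map_smul, smul_eq_mul]
        rw [hsymm X v₁]; ring
      rw [hexp]; nlinarith
    · have hexp : g (v₁ + t • X) X = g v₁ X + t * g X X := by
        simp [map_add, map_smul, smul_eq_mul]
      rw [hexp]; nlinarith
  -- v₁ is timelike (not null)
  have hv₁time : g v₁ v₁ < 0 := by
    rcases hq.lt_or_eq with hlt | hnull
    · exact hlt
    · exfalso
      set c : ℝ := -(g v₁ X) with hc
      set d : ℝ := -(g X X) with hd
      have hcpos : 0 < c := by rw [hc]; linarith
      have hdpos : 0 < d := by rw [hd]; linarith
      set e : ℝ := Real.sqrt (2 * c) with he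
      have hepos : 0 < e := Real.sqrt_pos.mpr (by linarith)
      have he2 : e ^ 2 = 2 * c := Real.sq_sqrt (by linarith)
      set α : ℝ := θ v₁ with hα
      have hαpos : 0 < α := by
        have h1 := hθ v₁ hv₁C
        have h2 : ‖v₁‖ ≤ θ v₁ := le_trans (le_max_right _ _) h1
        have h3 : 0 < ‖v₁‖ := norm_pos_iff.mpr hv₁ne
        rw [hα]; linarith
      set sd : ℝ := Real.sqrt d with hsd
      have hsdpos : 0 < sd := Real.sqrt_pos.mpr hdpos
      have hsd2 : sd ^ 2 = d := Real.sq_sqrt hdpos.le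
      set ε : ℝ := min (min (e / (2 * (|θ X| + 1))) (α / (2 * e + sd + 1)))
          (min (α / (e + 1)) (α * e / (4 * (|p X| + 1)))) with hε
      have hεpos : 0 < ε := by
        apply lt_min (lt_min ?_ ?_) (lt_min ?_ ?_)
        · positivity
        · positivity
        · positivity
        · positivity
      set t : ℝ := min 1 (ε ^ 2) with ht
      have htpos : 0 < t := lt_min one_pos (by positivity)
      set st : ℝ := Real.sqrt t with hst
      have hstpos : 0 < st := Real.sqrt_pos.mpr htpos
      have hst2 : st ^ 2 = t := Real.sq_sqrt htpos.le
      have hstε : st ≤ ε := by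
        rw [hst]
        calc Real.sqrt t ≤ Real.sqrt (ε ^ 2) := Real.sqrt_le_sqrt (min_le_right _ _)
          _ = ε := Real.sqrt_sq hεpos.le
      have hst1 : st ≤ 1 := by
        rw [hst]
        calc Real.sqrt t ≤ Real.sqrt 1 := Real.sqrt_le_sqrt (min_le_left _ _)
          _ = 1 := Real.sqrt_one
      have htst : t ≤ st := by
        have hm := mul_le_mul_of_nonneg_left hst1 hstpos.le
        have h2 : st * st = t := by rw [← hst2]; ring
        linarith only [hm, h2]
      -- the κ inequalities
      have hκ1 : st * (2 * (|θ X| + 1)) ≤ e := by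
        have h := le_trans hstε (le_trans (min_le_left _ _) (min_le_left _ _))
        rw [le_div_iff₀ (by positivity)] at h
        exact h
      have hκ2 : st * (2 * e + sd + 1) ≤ α := by
        have h := le_trans hstε (le_trans (min_le_left _ _) (min_le_right _ _))
        rw [le_div_iff₀ (by positivity)] at h
        exact h
      have hκ3 : st * (e + 1) ≤ α := by
        have h := le_trans hstε (le_trans (min_le_right _ _) (min_le_left _ _))
        rw [le_div_iff₀ (by positivity)] at h
        exact h
      have hκ4 : st * (4 * (|p X| + 1)) ≤ α * e := by
        have h := le_trans hstε (le_trans (min_le_right _ _) (min_le_right _ _))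
        rw [le_div_iff₀ (by positivity)] at h
        exact h
      -- the quadratic form along the perturbation
      have hQt : g (v₁ + t • X) (v₁ + t • X) = -(2 * c * t + d * t ^ 2) := by
        have hexp : g (v₁ + t • X) (v₁ + t • X) =
            g v₁ v₁ + 2 * t * g v₁ X + t ^ 2 * g X X := by
          simp [map_add, map_smul, smul_eq_mul]
          rw [hsymm X v₁]; ring
        have hcv : g v₁ X = -c := by rw [hc]; ring
        have hdv : g X X = -d := by rw [hd]; ring
        rw [hexp, hnull, hcv, hdv]; ring
      have hQtn : 0 ≤ 2 * c * t + d * t ^ 2 := by positivity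
      set s1 : ℝ := Real.sqrt (2 * c * t + d * t ^ 2) with hs1
      have hs1nn : 0 ≤ s1 := Real.sqrt_nonneg _
      have hs1low : e * st ≤ s1 := by
        rw [hs1, hst, he]
        calc Real.sqrt (2 * c) * Real.sqrt t = Real.sqrt (2 * c * t) :=
              (Real.sqrt_mul (by linarith) t).symm
          _ ≤ Real.sqrt (2 * c * t + d * t ^ 2) := Real.sqrt_le_sqrt (le_add_of_nonneg_right (by positivity))
      have hs1up : s1 ≤ e * st + sd * t := by
        rw [hs1]
        have hrhs : 0 ≤ e * st + sd * t := by positivity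
        have hsq : 2 * c * t + d * t ^ 2 ≤ (e * st + sd * t) ^ 2 := by
          have hexp2 : (e * st + sd * t) ^ 2
              = e ^ 2 * st ^ 2 + 2 * (e * st) * (sd * t) + sd ^ 2 * t ^ 2 := by ring
          rw [hexp2, he2, hst2, hsd2]
          linarith only [mul_nonneg (mul_nonneg hepos.le hstpos.le)
            (mul_nonneg hsdpos.le htpos.le)]
        calc Real.sqrt (2 * c * t + d * t ^ 2) ≤ Real.sqrt ((e * st + sd * t) ^ 2) :=
              Real.sqrt_le_sqrt hsq
          _ = e * st + sd * t := Real.sqrt_sq hrhs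
      -- value of L at the perturbed point
      have hLt : L (v₁ + t • X) = (α + t * θ X - s1) ^ 2 := by
        rw [hL, hQt, abs_neg, abs_of_nonneg hQtn, ← hs1]
        have hθt : θ (v₁ + t • X) = α + t * θ X := by
          rw [hα]; simp [map_add, map_smul, smul_eq_mul]
        rw [hθt]
      have hLv₁ : L v₁ = α ^ 2 := by
        rw [hL, hnull]
        simp [hα]
      set u : ℝ := α + t * θ X - s1 with hu
      -- bound |u| by α - (e/2) st
      have hbound1 : t * |θ X| ≤ e / 2 * st := by
        have hm : t * (2 * (|θ X| + 1)) ≤ st * e := by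
          calc t * (2 * (|θ X| + 1)) = st * (st * (2 * (|θ X| + 1))) := by
                rw [← hst2]; ring
            _ ≤ st * e := mul_le_mul_of_nonneg_left hκ1 hstpos.le
        linarith only [hm, htpos.le]
      have hup : u ≤ α - e / 2 * st := by
        rw [hu]
        have h1 : t * θ X ≤ t * |θ X| :=
          mul_le_mul_of_nonneg_left (le_abs_self _) htpos.le
        linarith only [hs1low, hbound1, h1]
      have hlow : -(α - e / 2 * st) ≤ u := by
        rw [hu]
        have h1 : t * (-|θ X|) ≤ t * θ X :=
          mul_le_mul_of_nonneg_left (neg_abs_le _) htpos.le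
        have h2 : sd * t ≤ sd * st := mul_le_mul_of_nonneg_left htst hsdpos.le
        linarith only [hs1up, hbound1, h1, h2, hκ2, hαpos.le, hstpos.le]
      have hu2 : u ^ 2 ≤ (α - e / 2 * st) ^ 2 := sq_le_sq' hlow hup
      have hw : e / 2 * st ≤ α := by
        linarith only [hκ3, hstpos.le, mul_nonneg hstpos.le hepos.le]
      have hgap : α * (e / 2 * st) ≤ α ^ 2 - u ^ 2 := by
        linarith only [hu2,
          mul_le_mul_of_nonneg_left hw (by positivity : (0:ℝ) ≤ e / 2 * st)]
      -- compare with the maximality of v₁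
      have hmem := hmemC t htpos
      have hle2 : p (v₁ + t • X) - L (v₁ + t • X) ≤ H := hH.1 ⟨_, hmem, rfl⟩
      have hp' : p (v₁ + t • X) = p v₁ + t * p X := by
        simp [map_add, map_smul, smul_eq_mul]
      have hHval : H = p v₁ - α ^ 2 := by
        rw [← hfv₁H]
        show p v₁ - L v₁ = p v₁ - α ^ 2
        rw [hLv₁]
      rw [hp', hLt, hHval] at hle2
      have hineq : α ^ 2 - u ^ 2 ≤ -(t * p X) := by linarith
      have hpabs : -(t * p X) ≤ t * |p X| := by
        have := mul_le_mul_of_nonneg_left (neg_abs_le (p X)) htpos.le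
        linarith
      have hm4 : t * (4 * (|p X| + 1)) ≤ st * (α * e) := by
        calc t * (4 * (|p X| + 1)) = st * (st * (4 * (|p X| + 1))) := by
              rw [← hst2]; ring
          _ ≤ st * (α * e) := mul_le_mul_of_nonneg_left hκ4 hstpos.le
      have hpos3 : 0 < α * e * st := mul_pos (mul_pos hαpos hepos) hstpos
      clear_value u s1 st t ε sd e α d c
      linarith only [hgap, hineq, hpabs, hm4, htpos, hpos3]
  -- interior
  have hv₁int : v₁ ∈ interior C := by
    apply interior_maximal (t := {v : V | g v v < 0 ∧ g v X < 0})
    · intro v hv; rw [hCeq]; exact ⟨hv.1.le, hv.2.le⟩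
    · exact (isOpen_lt hQcont continuous_const).inter (isOpen_lt hgXcont continuous_const)
    · exact ⟨hv₁time, hv₁X⟩
  -- differentiability at v₁
  have hLdiff : DifferentiableAt ℝ L v₁ := by
    have hopen : IsOpen {v : V | g v v < 0} := isOpen_lt hQcont continuous_const
    have hφ : DifferentiableAt ℝ (fun v => (θ v - Real.sqrt (-(g v v))) ^ 2) v₁ := by
      apply DifferentiableAt.pow
      apply DifferentiableAt.sub θ.differentiableAt
      exact DifferentiableAt.sqrt (hQdiff v₁).neg (by simp; linarith)
    apply hφ.congr_of_eventuallyEq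
    filter_upwards [hopen.mem_nhds hv₁time] with v hv
    rw [hL, abs_of_nonpos (le_of_lt hv)]
  have hDL : HasFDerivAt L (fderiv ℝ L v₁) v₁ := hLdiff.hasFDerivAt
  have hloc : IsLocalMax f v₁ := by
    have hev : ∀ᶠ v in nhds v₁, v ∈ C :=
      Filter.mem_of_superset (isOpen_interior.mem_nhds hv₁int) interior_subset
    filter_upwards [hev] with v hv
    calc f v ≤ H := hH.1 ⟨v, hv, rfl⟩
      _ = f v₁ := hfv₁H.symm
  have hfD : HasFDerivAt f (p - fderiv ℝ L v₁) v₁ := p.hasFDerivAt.sub hDL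
  have hzero : p - fderiv ℝ L v₁ = 0 := hloc.hasFDerivAt_eq_zero hfD
  have hpD : fderiv ℝ L v₁ = p := by
    have := sub_eq_zero.mp hzero; exact this.symm
  refine ⟨hHpos, v₁, hv₁int, ?_, ?_⟩
  · rw [← hfv₁H]
  · rw [← hpD]; exact hDL
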